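/- arXiv:1010.0600 — 4 statements merged into one kernel-verified Lean document; each statement's English description precedes it below -/
import Mathlib

section
/- Let A ⊆ B(H) be a unital C*-algebra with cyclic vector ξ and state φ = ⟨·ξ, ξ⟩. For a ∈ A_φ, u a unitary in A_φ, and b, c ∈ A one has ⟨(ba)ξ, cξ⟩ = ⟨bξ, (ca*)ξ⟩; in particular the map bξ ↦ (bu)ξ extends to a unitary operator on H. -/
open scoped InnerProductSpace

section Aux

variable {H : Type*} [NormedAddCommGroup H] [InnerProductSpace ℂ H] [CompleteSpace H]

/-- Evaluation at `ξ` as a linear map on `A`. -/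
def evalXi (A : StarSubalgebra ℂ (H →L[ℂ] H)) (ξ : H) : A →ₗ[ℂ] H where
  toFun a := (a : H →L[ℂ] H) ξ
  map_add' a b := by simp
  map_smul' c a := by simp

/-- `b ↦ (b * u) ξ` as a linear map on `A`. -/
def mulEvalXi (A : StarSubalgebra ℂ (H →L[ℂ] H)) (ξ : H) (u : H →L[ℂ] H) : A →ₗ[ℂ] H where
  toFun b := ((b : H →L[ℂ] H) * u) ξ
  map_add' a b := by simp [add_mul]
  map_smul' c a := by simp [smul_mul_assoc]

theorem exists_unitary_extension (A : StarSubalgebra ℂ (H →L[ℂ] H)) (ξ : H)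
    (hcyc : Dense {y : H | ∃ a ∈ A, a ξ = y}) (u : H →L[ℂ] H) (hu : u ∈ A)
    (hsuu : star u * u = 1) (husu : u * star u = 1)
    (hnorm : ∀ b : A, ‖((b : H →L[ℂ] H) * u) ξ‖ = ‖(b : H →L[ℂ] H) ξ‖) :
    ∃ U : H ≃ₗᵢ[ℂ] H, ∀ b ∈ A, U (b ξ) = (b * u) ξ := by
  classical
  set ev : A →ₗ[ℂ] H := evalXi A ξ with hev
  set g : A →ₗ[ℂ] H := mulEvalXi A ξ u with hg
  have hevapp : ∀ b : A, ev b = (b : H →L[ℂ] H) ξ := fun b => rfl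
  have hgapp : ∀ b : A, g b = ((b : H →L[ℂ] H) * u) ξ := fun b => rfl
  have hnormg : ∀ b : A, ‖g b‖ = ‖ev b‖ := fun b => hnorm b
  -- range of ev as a submodule
  set S : Submodule ℂ H := LinearMap.range ev with hS
  have hSset : (S : Set H) = {y : H | ∃ a ∈ A, a ξ = y} := by
    ext y
    constructor
    · rintro ⟨a, rfl⟩; exact ⟨a, a.2, rfl⟩
    · rintro ⟨a, ha, rfl⟩; exact ⟨⟨a, ha⟩, rfl⟩
  have hSdense : Dense (S : Set H) := by rw [hSset]; exact hcyc
  -- the well-defined map on S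
  have hker : LinearMap.ker ev ≤ LinearMap.ker g := by
    intro b hb
    rw [LinearMap.mem_ker] at hb ⊢
    have := hnormg b
    rw [hb, norm_zero] at this
    exact norm_eq_zero.mp this
  obtain ⟨f, hf⟩ : ∃ f : S →ₗ[ℂ] H, ∀ b : A, f ⟨ev b, LinearMap.mem_range_self ev b⟩ = g b := by
    refine ⟨((LinearMap.ker ev).liftQ g hker).comp
      (ev.quotKerEquivRange.symm : S →ₗ[ℂ] (A ⧸ LinearMap.ker ev)), fun b => ?_⟩
    have h1 : ev.quotKerEquivRange.symm ⟨ev b, LinearMap.mem_range_self ev b⟩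
        = Submodule.Quotient.mk b := ev.quotKerEquivRange_symm_apply_image b _
    simp [LinearMap.comp_apply, h1]
  have hfiso : ∀ s : S, ‖f s‖ = ‖s‖ := by
    rintro ⟨y, b, rfl⟩
    rw [hf b]
    exact (hnormg b).trans rfl
  set fI : S →ₗᵢ[ℂ] H := ⟨f, hfiso⟩ with hfI
  -- extend to H
  have hdr : DenseRange (S.subtypeL : S →L[ℂ] H) := by
    rw [DenseRange]
    convert hSdense using 2
    ext y; exact ⟨by rintro ⟨s, rfl⟩; exact s.2, fun hy => ⟨⟨y, hy⟩, rfl⟩⟩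
  have hui : IsUniformInducing (S.subtypeL : S →L[ℂ] H) :=
    isUniformEmbedding_subtype_val.isUniformInducing
  set F : H →L[ℂ] H := ContinuousLinearMap.extend fI.toContinuousLinearMap S.subtypeL
    with hF
  have hFs : ∀ s : S, F s = f s := fun s => by
    have := ContinuousLinearMap.extend_eq (f := fI.toContinuousLinearMap) (e := S.subtypeL) hdr hui s
    exact this
  have hFb : ∀ b : A, F ((b : H →L[ℂ] H) ξ) = ((b : H →L[ℂ] H) * u) ξ := by
    intro b
    have := hFs ⟨ev b, LinearMap.mem_range_self ev b⟩
    rw [hf b] at this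
    exact this
  have hFiso : ∀ x : H, ‖F x‖ = ‖x‖ := by
    have : (fun x : H => ‖F x‖) = fun x : H => ‖x‖ := by
      refine Continuous.ext_on hSdense (F.continuous.norm) continuous_norm ?_
      rintro y hy
      obtain ⟨b, rfl⟩ : y ∈ S := hy
      show ‖F (ev b)‖ = ‖ev b‖
      exact (congrArg norm (hFs ⟨ev b, LinearMap.mem_range_self ev b⟩)).trans (hfiso _)
    exact fun x => congrFun this x
  set FI : H →ₗᵢ[ℂ] H := ⟨(F : H →ₗ[ℂ] H), hFiso⟩ with hFI
  have hFIapp : ∀ x : H, FI x = F x := fun x => rfl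
  -- surjectivity
  have hsurj : Function.Surjective FI := by
    have hclosed : IsClosed (Set.range FI) :=
      (FI.isometry.isClosedEmbedding).isClosed_range
    have hdense : Dense (Set.range FI) := by
      refine hcyc.mono ?_
      rintro y ⟨a, ha, rfl⟩
      have hmem : a * star u ∈ A := mul_mem ha (star_mem hu)
      refine ⟨(a * star u : H →L[ℂ] H) ξ, ?_⟩
      rw [hFIapp, hFb ⟨a * star u, hmem⟩]
      show ((a * star u : H →L[ℂ] H) * u) ξ = a ξ
      rw [mul_assoc, hsuu, mul_one]
    have : Set.range FI = Set.univ := hclosed.closure_eq ▸ hdense.closure_eq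
    intro y
    have : y ∈ Set.range FI := this ▸ Set.mem_univ y
    exact this
  refine ⟨LinearIsometryEquiv.ofSurjective FI hsurj, fun b hb => ?_⟩
  have : (LinearIsometryEquiv.ofSurjective FI hsurj) (b ξ) = FI (b ξ) := rfl
  rw [this, hFIapp, hFb ⟨b, hb⟩]

end Aux

/-- Let `A ⊆ B(H)` be a unital C*-algebra with unit cyclic vector `ξ` and vector state
`φ = ⟨·ξ, ξ⟩`. For `a` in the centralizer `A_φ` and `b, c ∈ A` one has
`⟨(ba)ξ, cξ⟩ = ⟨bξ, (ca*)ξ⟩`; in particular, for a unitary `u ∈ A_φ` the map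
`bξ ↦ (bu)ξ` extends to a unitary operator on `H`. -/
theorem centralizer_inner_identity_and_unitary
    {H : Type*} [NormedAddCommGroup H] [InnerProductSpace ℂ H] [CompleteSpace H]
    (A : StarSubalgebra ℂ (H →L[ℂ] H)) (ξ : H) (hξ : ‖ξ‖ = 1)
    (hcyc : Dense {y : H | ∃ a ∈ A, a ξ = y})
    (C : Set (H →L[ℂ] H))
    (hC : C = {a : H →L[ℂ] H | a ∈ A ∧
      ∀ b ∈ A, ⟪(a * b) ξ, ξ⟫_ℂ = ⟪(b * a) ξ, ξ⟫_ℂ}) :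
    (∀ a ∈ C, ∀ b ∈ A, ∀ c ∈ A,
        ⟪(b * a) ξ, c ξ⟫_ℂ = ⟪b ξ, (c * star a) ξ⟫_ℂ) ∧
    (∀ u ∈ C, star u * u = 1 → u * star u = 1 →
        ∃ U : H ≃ₗᵢ[ℂ] H, ∀ b ∈ A, U (b ξ) = (b * u) ξ) := by
  subst hC
  have key : ∀ a ∈ {a : H →L[ℂ] H | a ∈ A ∧
      ∀ b ∈ A, ⟪(a * b) ξ, ξ⟫_ℂ = ⟪(b * a) ξ, ξ⟫_ℂ}, ∀ b ∈ A, ∀ c ∈ A,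
      ⟪(b * a) ξ, c ξ⟫_ℂ = ⟪b ξ, (c * star a) ξ⟫_ℂ := by
    rintro a ⟨ha, hcen⟩ b hb c hc
    have h1 : ⟪(star c * (b * a)) ξ, ξ⟫_ℂ = ⟪(b * a) ξ, c ξ⟫_ℂ := by
      rw [ContinuousLinearMap.mul_apply, ContinuousLinearMap.star_eq_adjoint,
        ContinuousLinearMap.adjoint_inner_left]
    have h2 : ⟪(star (c * star a) * b) ξ, ξ⟫_ℂ = ⟪b ξ, (c * star a) ξ⟫_ℂ := by
      rw [ContinuousLinearMap.mul_apply, ContinuousLinearMap.star_eq_adjoint,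
        ContinuousLinearMap.adjoint_inner_left]
    rw [← h1, ← h2]
    have hmem : star c * b ∈ A := mul_mem (star_mem hc) hb
    have := hcen (star c * b) hmem
    calc ⟪(star c * (b * a)) ξ, ξ⟫_ℂ
        = ⟪((star c * b) * a) ξ, ξ⟫_ℂ := by rw [mul_assoc]
      _ = ⟪(a * (star c * b)) ξ, ξ⟫_ℂ := (this).symm
      _ = ⟪(star (c * star a) * b) ξ, ξ⟫_ℂ := by
          rw [star_mul, star_star, mul_assoc]
  refine ⟨key, ?_⟩
  rintro u hu hsu hus
  have hnorm : ∀ b : A, ‖((b : H →L[ℂ] H) * u) ξ‖ = ‖(b : H →L[ℂ] H) ξ‖ := by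
    intro b
    have hbu : (b : H →L[ℂ] H) * u ∈ A := mul_mem b.2 hu.1
    have h := key u hu (b * u) hbu b b.2
    -- key u hu b b.2 (b*u) hbu : ⟪(b*u)ξ, (b*u)ξ⟫ = ⟪bξ, (b*u*star u)ξ⟫
    have h2 := key u hu b b.2 ((b : H →L[ℂ] H) * u) hbu
    have h3 : ((b : H →L[ℂ] H) * u * star u) = (b : H →L[ℂ] H) := by
      rw [mul_assoc, hus, mul_one]
    rw [h3] at h2
    have h5 : ‖((b : H →L[ℂ] H) * u) ξ‖ ^ 2 = ‖(b : H →L[ℂ] H) ξ‖ ^ 2 := by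
      rw [← inner_self_eq_norm_sq (𝕜 := ℂ), ← inner_self_eq_norm_sq (𝕜 := ℂ), h2]
    have h6 := congrArg Real.sqrt h5
    rwa [Real.sqrt_sq (norm_nonneg _), Real.sqrt_sq (norm_nonneg _)] at h6
  exact exists_unitary_extension A ξ hcyc u hu.1 hsu hus hnorm
end

section
/- Let G be a countable group acting on a metrizable compact space X, φ a state on C(X) ⋊ G with centralizer containing C(X), and let Φ = ∫⊕ φ_x dν(x) be the disintegration of the induced state on C(X) ⊗ C*(G). Then for every g ∈ G, φ_x(λ_g) = 0 for ν-almost every x not fixed by g. -/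
open MeasureTheory

/-- A state on a unital C*-algebra. -/
def IsState {A : Type*} [NormedRing A] [StarRing A] [NormedAlgebra ℂ A]
    (φ : A →ₗ[ℂ] ℂ) : Prop :=
  φ 1 = 1 ∧ ∀ a : A, ∃ r : ℝ, 0 ≤ r ∧ φ (star a * a) = r

open scoped ComplexConjugate ENNReal

lemma isState_star_apply {B : Type*} [NormedRing B] [StarRing B] [NormedAlgebra ℂ B]
    [StarModule ℂ B] {ψ : B →ₗ[ℂ] ℂ} (hψ : IsState ψ) (a : B) :
    ψ (star a) = conj (ψ a) := by
  obtain ⟨hone, hpos⟩ := hψ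
  obtain ⟨q, hq0, hq⟩ := hpos a
  obtain ⟨r1, hr10, hr1⟩ := hpos (a + 1)
  obtain ⟨r2, hr20, hr2⟩ := hpos (a + Complex.I • 1)
  have e1 : star (a + 1) * (a + 1) = star a * a + star a + a + 1 := by
    rw [star_add, star_one]; noncomm_ring
  have e2 : star (a + Complex.I • 1) * (a + Complex.I • 1)
      = star a * a + Complex.I • star a + (-Complex.I) • a + 1 := by
    rw [star_add, star_smul, star_one, Complex.star_def, Complex.conj_I]
    simp only [add_mul, mul_add, smul_mul_assoc, mul_smul_comm, smul_add, smul_neg, smul_smul,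
      one_mul, mul_one, neg_mul, Complex.I_mul_I, neg_neg, one_smul, neg_smul]
    abel
  have E1 : (q : ℂ) + ψ (star a) + ψ a + 1 = r1 := by
    rw [← hq, ← hone, ← hr1, e1]; simp [map_add]
  have E2 : (q : ℂ) + Complex.I * ψ (star a) - Complex.I * ψ a + 1 = r2 := by
    rw [← hq, ← hone, ← hr2, e2]
    simp only [map_add, _root_.map_smul, smul_eq_mul, neg_mul, neg_smul, map_neg]
    ring
  set s := ψ (star a)
  set t := ψ a
  have h1 : (s + t).im = 0 := by
    have hst : s + t = ((r1 - q - 1 : ℝ) : ℂ) := by push_cast; linear_combination E1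
    rw [hst]; exact Complex.ofReal_im _
  have h2 : (s - t).re = 0 := by
    have hI : Complex.I * (s - t) = ((r2 - q - 1 : ℝ) : ℂ) := by push_cast; linear_combination E2
    have := congrArg Complex.im hI
    simpa [Complex.mul_im] using this
  apply Complex.ext
  · rw [Complex.sub_re] at h2
    rw [Complex.conj_re]; linarith
  · rw [Complex.add_im] at h1
    rw [Complex.conj_im]; linarith

lemma isState_norm_le_one {B : Type*} [NormedRing B] [StarRing B] [NormedAlgebra ℂ B]
    [StarModule ℂ B] {ψ : B →ₗ[ℂ] ℂ} (hψ : IsState ψ) {a : B}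
    (ha : star a * a = 1) : ‖ψ a‖ ≤ 1 := by
  obtain ⟨r, hr0, hr⟩ := hψ.2 (a - ψ a • 1)
  have hs := isState_star_apply hψ a
  set t := ψ a with ht
  have e : star (a - t • 1) * (a - t • 1)
      = star a * a - t • star a - conj t • a + (t * conj t) • 1 := by
    rw [star_sub, star_smul, star_one, Complex.star_def]
    simp only [sub_mul, mul_sub, smul_mul_assoc, mul_smul_comm, smul_sub, smul_smul,
      one_mul, mul_one]
    abel
  have E : (1 : ℂ) - t * conj t = r := by
    rw [← hr, e]
    simp only [map_add, map_sub, _root_.map_smul, smul_eq_mul, ha, hψ.1, hs]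
    ring
  have E' : ((1 - Complex.normSq t : ℝ) : ℂ) = (r : ℂ) := by
    rw [← E]; rw [Complex.mul_conj]; push_cast; ring
  have E'' : 1 - Complex.normSq t = r := by exact_mod_cast E'
  have h1 : Complex.normSq t ≤ 1 := by linarith
  have h2 : ‖t‖ ^ 2 = Complex.normSq t := by
    rw [Complex.sq_norm]
  nlinarith [norm_nonneg t]

lemma ae_zero_of_forall_contMul {X : Type*} [TopologicalSpace X] [CompactSpace X] [T2Space X]
    [TopologicalSpace.MetrizableSpace X] [MeasurableSpace X] [BorelSpace X]
    (ν : Measure X) [IsFiniteMeasure ν] {w : X → ℂ} (hw : MemLp w 2 ν)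
    (hint : ∀ k : C(X, ℂ), ∫ x, k x * w x ∂ν = 0) : ∀ᵐ x ∂ν, w x = 0 := by
  haveI : Fact ((1:ENNReal) ≤ 2) := ⟨by norm_num⟩
  set W : Lp ℂ 2 ν := hw.toLp w with hW
  have hker : ∀ k : C(X, ℂ), @inner ℂ _ _ ((ContinuousMap.toLp 2 ν ℂ) k) W = 0 := by
    intro k
    rw [MeasureTheory.L2.inner_def]
    have h1 : ((ContinuousMap.toLp 2 ν ℂ) k : X → ℂ) =ᵐ[ν] k :=
      ContinuousMap.coeFn_toLp (p := 2) (μ := ν) (𝕜 := ℂ) k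
    have h2 : (W : X → ℂ) =ᵐ[ν] w := hw.coeFn_toLp
    have : ∫ x, @inner ℂ _ _ (((ContinuousMap.toLp 2 ν ℂ) k : X → ℂ) x) ((W : X → ℂ) x) ∂ν
        = ∫ x, (star k : C(X, ℂ)) x * w x ∂ν := by
      apply integral_congr_ae
      filter_upwards [h1, h2] with x e1 e2
      rw [e1, e2]
      simp [RCLike.inner_apply, ContinuousMap.star_apply, Complex.star_def, mul_comm]
    rw [this, hint (star k)]
  have hall : ∀ v : Lp ℂ 2 ν, @inner ℂ _ _ v W = 0 := by
    have hd := ContinuousMap.toLp_denseRange (α := X) (E := ℂ) (μ := ν) ℂ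
      (by norm_num : (2:ENNReal) ≠ ∞)
    intro v
    refine hd.induction_on v ?_ hker
    exact isClosed_eq (continuous_id.inner continuous_const) continuous_const
  have hW0 : W = 0 := by
    have := hall W
    rwa [inner_self_eq_zero] at this
  have h2 : (W : X → ℂ) =ᵐ[ν] w := hw.coeFn_toLp
  have h3 : (W : X → ℂ) =ᵐ[ν] 0 := by rw [hW0]; exact Lp.coeFn_zero ℂ 2 ν
  filter_upwards [h2.symm.trans h3] with x hx using hx

/-- Let a countable group `G` act by homeomorphisms on a metrizable compact space `X`,
let `A = C(X) ⋊ G` be the full crossed product (with embedding `ι` and unitaries `u g`),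
let `CG = C*(G)` be the full group C*-algebra with generators `lam g` and canonical map
`j : C*(G) → C(X) ⋊ G`, `j(λ_g) = u_g`.  Let `φ` be a state on `A` whose centralizer
contains `C(X)`, and let `Φ = ∫⊕ φ_x dν(x)` be the disintegration over `C(X)` of the
induced state on `C(X) ⊗ C*(G)`, i.e. `φ(ι f · j a) = ∫ f(x) φ_x(a) dν(x)`.
Then for every `g ∈ G`, `φ_x(λ_g) = 0` for `ν`-almost every `x` not fixed by `g`. -/
theorem disintegration_supported_on_stabilizers
    {G : Type*} [Group G] [Countable G]
    {X : Type*} [TopologicalSpace X] [CompactSpace X] [T2Space X]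
    [TopologicalSpace.MetrizableSpace X] [MeasurableSpace X] [BorelSpace X] [MulAction G X]
    (hcont : ∀ g : G, Continuous fun x : X => g • x)
    {A : Type*} [NormedRing A] [StarRing A] [CStarRing A] [NormedAlgebra ℂ A]
    [CompleteSpace A] [StarModule ℂ A]
    (ι : C(X, ℂ) →⋆ₐ[ℂ] A) (u : G → A)
    (hu_mul : ∀ g h : G, u g * u h = u (g * h)) (hu_one : u 1 = 1)
    (hu_star : ∀ g : G, star (u g) = u g⁻¹)
    (hcov : ∀ (g : G) (f : C(X, ℂ)),
      u g * ι f * star (u g) = ι ⟨fun x => f (g⁻¹ • x), f.continuous.comp (hcont g⁻¹)⟩)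
    -- the full group C*-algebra with its generators and the canonical map to `A`
    {CG : Type*} [NormedRing CG] [StarRing CG] [CStarRing CG] [NormedAlgebra ℂ CG]
    [CompleteSpace CG] [StarModule ℂ CG]
    (lam : G → CG)
    (hlam_mul : ∀ g h : G, lam g * lam h = lam (g * h)) (hlam_one : lam 1 = 1)
    (hlam_star : ∀ g : G, star (lam g) = lam g⁻¹)
    (j : CG →⋆ₐ[ℂ] A) (hj : ∀ g : G, j (lam g) = u g)
    -- the state `φ` with centralizer containing `C(X)`
    (φ : A →ₗ[ℂ] ℂ) (hφ : IsState φ)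
    (hcen : ∀ (f : C(X, ℂ)) (a : A), φ (ι f * a) = φ (a * ι f))
    -- the disintegration `Φ = ∫⊕ φ_x dν(x)` of the induced state on `C(X) ⊗ C*(G)`
    (ν : Measure X) [IsProbabilityMeasure ν]
    (φx : X → (CG →ₗ[ℂ] ℂ))
    (hφx_state : ∀ x : X, IsState (φx x))
    (hφx_meas : ∀ a : CG, Measurable fun x : X => φx x a)
    (hdis : ∀ (f : C(X, ℂ)) (a : CG), φ (ι f * j a) = ∫ x, f x * φx x a ∂ν) :
    ∀ g : G, ∀ᵐ x ∂ν, g • x ≠ x → φx x (lam g) = 0 := by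
  intro g
  set h : X → ℂ := fun x => φx x (lam g) with hh
  have hsu : star (lam g) * lam g = 1 := by
    rw [hlam_star, hlam_mul, inv_mul_cancel, hlam_one]
  have hbound : ∀ x, ‖h x‖ ≤ 1 := fun x => isState_norm_le_one (hφx_state x) hsu
  have hmeas : Measurable h := hφx_meas (lam g)
  have huu : star (u g) * u g = 1 := by
    rw [hu_star, hu_mul, inv_mul_cancel, hu_one]
  -- the key identity coming from the centralizer property
  have key : ∀ k f : C(X, ℂ),
      ∫ x, k x * (f x * f (g⁻¹ • x)) * h x ∂ν = ∫ x, k x * (f x * f x) * h x ∂ν := by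
    intro k f
    set fg : C(X, ℂ) := ⟨fun x => f (g⁻¹ • x), f.continuous.comp (hcont g⁻¹)⟩ with hfgdef
    have l1 : ∫ x, k x * (f x * f (g⁻¹ • x)) * h x ∂ν = φ (ι (k * f * fg) * j (lam g)) := by
      rw [hdis]
      refine integral_congr_ae (Filter.Eventually.of_forall fun x => ?_)
      simp only [ContinuousMap.mul_apply, hfgdef, ContinuousMap.coe_mk]
      ring
    have l2 : ∫ x, k x * (f x * f x) * h x ∂ν = φ (ι (f * (k * f)) * j (lam g)) := by
      rw [hdis]
      refine integral_congr_ae (Filter.Eventually.of_forall fun x => ?_)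
      simp only [ContinuousMap.mul_apply]
      ring
    rw [l1, l2, hj]
    have e1 : ι fg * u g = u g * ι f := by
      calc ι fg * u g = (u g * ι f * star (u g)) * u g := by rw [hcov g f]
        _ = u g * ι f * (star (u g) * u g) := by rw [mul_assoc]
        _ = u g * ι f := by rw [huu, mul_one]
    have em1 : ι (k * f * fg) * u g = ι (k * f) * u g * ι f := by
      rw [map_mul ι, mul_assoc, e1, ← mul_assoc]
    have em2 : ι (f * (k * f)) * u g = ι f * (ι (k * f) * u g) := by
      rw [map_mul ι, mul_assoc]
    rw [em1, em2, ← hcen f (ι (k * f) * u g)]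
  -- on any open set moved off itself by `g`, `h` vanishes a.e.
  have null_on : ∀ V : Set X, IsOpen V → (∀ x ∈ V, g⁻¹ • x ∉ V) →
      ν {x | x ∈ V ∧ h x ≠ 0} = 0 := by
    intro V hV hVd
    rcases Set.eq_empty_or_nonempty V with rfl | hVne
    · simp
    have hVc : Vᶜ.Nonempty := by
      rcases hVne with ⟨x0, hx0⟩
      by_contra hc
      rw [Set.not_nonempty_iff_eq_empty, Set.compl_empty_iff] at hc
      exact hVd x0 hx0 (by rw [hc]; trivial)
    letI : MetricSpace X := TopologicalSpace.metrizableSpaceMetric X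
    set f : C(X, ℂ) := ⟨fun x => (Metric.infDist x Vᶜ : ℂ),
      Complex.continuous_ofReal.comp (Metric.continuous_infDist_pt _)⟩ with hfdef
    have hfV : ∀ x, f x ≠ 0 ↔ x ∈ V := by
      intro x
      have hiff : x ∈ Vᶜ ↔ Metric.infDist x Vᶜ = 0 := by
        conv_lhs => rw [← hV.isClosed_compl.closure_eq]
        exact Metric.mem_closure_iff_infDist_zero hVc
      simp only [hfdef, ContinuousMap.coe_mk, ne_eq, Complex.ofReal_eq_zero]
      rw [← hiff, Set.notMem_compl_iff]
    have hff : ∀ x, f x * f (g⁻¹ • x) = 0 := by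
      intro x
      by_cases hx : f x = 0
      · rw [hx, zero_mul]
      · by_cases hy : f (g⁻¹ • x) = 0
        · rw [hy, mul_zero]
        · exact absurd ((hfV _).mp hy) (hVd x ((hfV x).mp hx))
    set w : X → ℂ := fun x => f x * f x * h x with hwdef
    have hwm : MemLp w 2 ν := by
      have hsm : AEStronglyMeasurable w ν :=
        ((f.continuous.measurable.mul f.continuous.measurable).mul hmeas).aestronglyMeasurable
      refine MemLp.of_bound hsm (‖f‖ * ‖f‖) (Filter.Eventually.of_forall fun x => ?_)
      have h1 : ‖f x‖ ≤ ‖f‖ := f.norm_coe_le_norm x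
      have h2 := hbound x
      have h3 : ‖w x‖ = ‖f x‖ * ‖f x‖ * ‖h x‖ := by
        simp only [hwdef, norm_mul]
      rw [h3]
      nlinarith [norm_nonneg (f x), norm_nonneg (h x), norm_nonneg f]
    have hint : ∀ k : C(X, ℂ), ∫ x, k x * w x ∂ν = 0 := by
      intro k
      have hk := key k f
      have hz : ∫ x, k x * (f x * f (g⁻¹ • x)) * h x ∂ν = 0 := by
        simp_rw [hff, mul_zero, zero_mul, integral_zero]
      rw [hz] at hk
      calc ∫ x, k x * w x ∂ν = ∫ x, k x * (f x * f x) * h x ∂ν := by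
            refine integral_congr_ae (Filter.Eventually.of_forall fun x => ?_)
            simp only [hwdef]; ring
        _ = 0 := hk.symm
    have hw0 := ae_zero_of_forall_contMul ν hwm hint
    have hnull : ν {x | ¬ (w x = 0)} = 0 := ae_iff.mp hw0
    refine measure_mono_null ?_ hnull
    rintro x ⟨hxV, hxh⟩
    simp only [Set.mem_setOf_eq, hwdef]
    exact mul_ne_zero (mul_ne_zero ((hfV x).mpr hxV) ((hfV x).mpr hxV)) hxh
  -- covering the set of non-fixed points by countably many such open sets
  haveI : SecondCountableTopology X := by
    letI := TopologicalSpace.metrizableSpaceMetric X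
    infer_instance
  rw [MeasureTheory.ae_iff]
  have hset : {x | ¬(g • x ≠ x → φx x (lam g) = 0)} = {x | g • x ≠ x ∧ h x ≠ 0} := by
    ext x
    simp only [Set.mem_setOf_eq, hh, ne_eq]
    tauto
  rw [hset]
  set B := TopologicalSpace.countableBasis X with hB
  have hBc : B.Countable := TopologicalSpace.countable_countableBasis X
  have hBb := TopologicalSpace.isBasis_countableBasis X
  set 𝒞 : Set (Set X) := {V ∈ B | ∀ x ∈ V, g⁻¹ • x ∉ V} with h𝒞
  have h𝒞c : 𝒞.Countable := hBc.mono (Set.sep_subset _ _)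
  have hsub : {x | g • x ≠ x ∧ h x ≠ 0} ⊆ ⋃ V ∈ 𝒞, {x | x ∈ V ∧ h x ≠ 0} := by
    rintro x ⟨hgx, hhx⟩
    obtain ⟨W1, W2, hW1, hW2, hxW1, hgxW2, hdisj⟩ := t2_separation (Ne.symm hgx)
    have hV0 : IsOpen (W1 ∩ (fun y => g • y) ⁻¹' W2) := hW1.inter (hW2.preimage (hcont g))
    have hxV0 : x ∈ W1 ∩ (fun y => g • y) ⁻¹' W2 := ⟨hxW1, hgxW2⟩
    obtain ⟨V, hVB, hxV, hVsub⟩ := hBb.exists_subset_of_mem_open hxV0 hV0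
    refine Set.mem_biUnion ?_ ⟨hxV, hhx⟩
    refine ⟨hVB, fun y hy hz => ?_⟩
    have h1 : y ∈ W1 := (hVsub hy).1
    have h2 : g • (g⁻¹ • y) ∈ W2 := (hVsub hz).2
    rw [smul_inv_smul] at h2
    exact Set.disjoint_left.mp hdisj h1 h2
  refine measure_mono_null hsub ?_
  rw [measure_biUnion_null_iff h𝒞c]
  intro V hV
  exact null_on V (hBb.isOpen hV.1) hV.2
end

section
/- Let G be a discrete abelian group, H ≤ G a subgroup with annihilator H⊥ = {χ ∈ Ĝ : χ(h) = 1 for all h ∈ H}, and λ a finite regular Borel measure on the compact dual group Ĝ. Then ∫_{Ĝ} χ(g) dλ(χ) = 0 for all g ∈ G \ H if and only if λ is invariant under translation by every element of H⊥. -/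
open MeasureTheory

/-! ### Auxiliary: characters of a discrete abelian group separate points -/

private noncomputable def ratChar : ℚ →+ Additive Circle where
  toFun q := Additive.ofMul (Circle.exp (2 * Real.pi * q))
  map_zero' := by simp
  map_add' a b := by
    show Additive.ofMul (Circle.exp (2 * Real.pi * ((a + b : ℚ) : ℝ))) =
      Additive.ofMul (Circle.exp (2 * Real.pi * a)) + Additive.ofMul (Circle.exp (2 * Real.pi * b))
    have h : (2 * Real.pi * ((a + b : ℚ) : ℝ)) = 2 * Real.pi * a + 2 * Real.pi * b := by
      push_cast; ring
    rw [h, Circle.exp_add]; rfl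

private lemma ratChar_apply (q : ℚ) :
    ratChar q = Additive.ofMul (Circle.exp (2 * Real.pi * q)) := rfl

private lemma ratChar_eq_zero_iff (q : ℚ) :
    ratChar q = 0 ↔ q ∈ AddSubgroup.zmultiples (1 : ℚ) := by
  rw [ratChar_apply]
  constructor
  · intro h
    have h' : Circle.exp (2 * Real.pi * q) = 1 := by simpa using h
    obtain ⟨n, hn⟩ := Circle.exp_eq_one.mp h'
    have hpi : (2 * Real.pi : ℝ) ≠ 0 := by positivity
    have hq : (q : ℝ) = (n : ℝ) := by
      apply mul_left_cancel₀ hpi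
      rw [hn]; ring
    have : q = (n : ℚ) := by exact_mod_cast hq
    exact ⟨n, by simp [this]⟩
  · rintro ⟨n, rfl⟩
    have h1 : ((n • (1 : ℚ) : ℚ) : ℝ) = (n : ℝ) := by simp
    rw [h1]
    have h2 : Circle.exp (2 * Real.pi * (n : ℝ)) = 1 := by
      simpa [mul_comm] using Circle.exp_int_mul_two_pi n
    simp [h2]

private lemma exists_circle_char {Q : Type*} [CommGroup Q] {a : Q} (ha : a ≠ 1) :
    ∃ φ : Q →* Circle, φ a ≠ 1 := by
  obtain ⟨c, hc⟩ := CharacterModule.exists_character_apply_ne_zero_of_ne_zero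
      (A := Additive Q) (a := Additive.ofMul a) (by simpa using ha)
  have hker : ∀ q ∈ AddSubgroup.zmultiples (1 : ℚ), ratChar q = 0 :=
    fun q hq => (ratChar_eq_zero_iff q).mpr hq
  let e : AddCircle (1 : ℚ) →+ Additive Circle := QuotientAddGroup.lift _ ratChar hker
  have he : ∀ x : AddCircle (1 : ℚ), e x = 0 → x = 0 := by
    intro x hx
    induction x using QuotientAddGroup.induction_on with
    | H q =>
      have hq : ratChar q = 0 := hx
      rw [ratChar_eq_zero_iff] at hq
      exact (QuotientAddGroup.eq_zero_iff q).mpr hq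
  refine ⟨MonoidHom.toAdditive.symm (e.comp c), fun h => hc ?_⟩
  apply he
  have : Additive.toMul (e (c (Additive.ofMul a))) = 1 := h
  simpa using this

/-- For `g ∉ H` there is a character of `G` trivial on `H` and nontrivial at `g`. -/
private lemma exists_annihilator_char {G : Type*} [CommGroup G] [TopologicalSpace G]
    [DiscreteTopology G] (H : Subgroup G) {g : G} (hg : g ∉ H) :
    ∃ χ₀ : PontryaginDual G, (∀ h : G, h ∈ H → χ₀ h = 1) ∧ χ₀ g ≠ 1 := by
  have ha : (QuotientGroup.mk g : G ⧸ H) ≠ 1 := by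
    simpa [QuotientGroup.eq_one_iff] using hg
  obtain ⟨φ, hφ⟩ := exists_circle_char ha
  refine ⟨⟨φ.comp (QuotientGroup.mk' H), continuous_of_discreteTopology⟩, fun h hh => ?_, ?_⟩
  · show φ (QuotientGroup.mk h) = 1
    rw [(QuotientGroup.eq_one_iff h).mpr hh, map_one]
  · exact hφ

/-! ### Auxiliary: compactness of the dual of a discrete group -/

private lemma compactSpace_continuousMap_discrete {X Y : Type*} [TopologicalSpace X]
    [DiscreteTopology X] [TopologicalSpace Y] [CompactSpace Y] : CompactSpace C(X, Y) := by
  let e : C(X, Y) ≃ₜ (X → Y) :=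
    { toEquiv := ContinuousMap.equivFnOfDiscrete (α := X) (β := Y)
      continuous_toFun := continuous_coeFun
      continuous_invFun := by
        show Continuous fun x => (ContinuousMap.equivFnOfDiscrete (α := X) (β := Y)).symm x
        rw [ContinuousMap.continuous_compactOpen]
        intro K hK U hU
        have hKf : K.Finite := hK.finite_of_discrete
        have : {x : X → Y | Set.MapsTo ((ContinuousMap.equivFnOfDiscrete (α := X) (β := Y)).symm x) K U}
            = ⋂ k ∈ K, (fun x : X → Y => x k) ⁻¹' U := by
          ext x
          simp [Set.MapsTo, ContinuousMap.equivFnOfDiscrete]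
        rw [this]
        exact hKf.isOpen_biInter fun k _ => hU.preimage (continuous_apply k) }
  exact e.symm.compactSpace

private instance pontryaginDual_compactSpace {G : Type*} [CommGroup G] [TopologicalSpace G]
    [DiscreteTopology G] : CompactSpace (PontryaginDual G) := by
  have : CompactSpace C(G, Circle) := compactSpace_continuousMap_discrete
  exact (ContinuousMonoidHom.isClosedEmbedding_toContinuousMap G Circle).compactSpace

/-! ### Auxiliary: uniqueness of regular measures from integrals of continuous functions -/

private lemma open_le_of_integral_eq {X : Type*} [TopologicalSpace X] [CompactSpace X] [T2Space X]
    [MeasurableSpace X] [BorelSpace X]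
    (μ ν : Measure X) [IsFiniteMeasure μ] [IsFiniteMeasure ν] [ν.Regular]
    (h : ∀ f : C(X, ℝ), ∫ x, f x ∂μ = ∫ x, f x ∂ν) {U : Set X} (hU : IsOpen U) :
    ν U ≤ μ U := by
  have key : ∀ K : Set X, IsCompact K → K ⊆ U → ν K ≤ μ U := by
    intro K hK hKU
    obtain ⟨f, hf0, hf1, hf01⟩ := exists_continuous_zero_one_of_isClosed
      hU.isClosed_compl hK.isClosed (by simpa [Set.disjoint_compl_left_iff_subset] using hKU)
    have hfint : ∀ (ρ : Measure X) [IsFiniteMeasure ρ], Integrable f ρ := fun ρ _ =>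
      f.continuous.integrable_of_hasCompactSupport (HasCompactSupport.of_compactSpace f)
    have hKm : MeasurableSet K := hK.isClosed.measurableSet
    have h1 : (ν K).toReal ≤ ∫ x, f x ∂ν := by
      rw [← measureReal_def, ← MeasureTheory.integral_indicator_one hKm]
      apply integral_mono ((integrable_const (1 : ℝ)).indicator hKm) (hfint ν)
      intro x
      by_cases hx : x ∈ K
      · simp [Set.indicator_of_mem hx, hf1 hx]
      · simp only [Set.indicator_of_notMem hx]
        exact (hf01 x).1
    have h2 : ∫ x, f x ∂μ ≤ (μ U).toReal := by
      rw [← measureReal_def, ← MeasureTheory.integral_indicator_one hU.measurableSet]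
      apply integral_mono (hfint μ) ((integrable_const (1 : ℝ)).indicator hU.measurableSet)
      intro x
      by_cases hx : x ∈ U
      · simpa [Set.indicator_of_mem hx] using (hf01 x).2
      · have : f x = 0 := hf0 hx
        simp [Set.indicator_of_notMem hx, this]
    have := h1.trans ((h f).symm ▸ h2)
    exact (ENNReal.toReal_le_toReal (measure_ne_top ν K) (measure_ne_top μ U)).mp this
  refine le_of_forall_lt fun r hr => ?_
  obtain ⟨K, hKU, hKc, hrK⟩ := Measure.Regular.innerRegular hU r hr
  exact hrK.trans_le (key K hKc hKU)

private lemma ext_of_integral_continuous {X : Type*} [TopologicalSpace X] [CompactSpace X]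
    [T2Space X] [MeasurableSpace X] [BorelSpace X]
    (μ ν : Measure X) [IsFiniteMeasure μ] [IsFiniteMeasure ν] [μ.Regular] [ν.Regular]
    (h : ∀ f : C(X, ℝ), ∫ x, f x ∂μ = ∫ x, f x ∂ν) : μ = ν := by
  have huniv : μ Set.univ = ν Set.univ := by
    have h1 := h 1
    simp only [ContinuousMap.coe_one, Pi.one_apply, integral_const, smul_eq_mul, mul_one] at h1
    exact (ENNReal.toReal_eq_toReal_iff' (measure_ne_top μ _) (measure_ne_top ν _)).mp h1
  refine ext_of_generate_finite {s | IsOpen s} ?_ isPiSystem_isOpen (fun s hs => ?_) huniv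
  · exact BorelSpace.measurable_eq.trans rfl
  · exact le_antisymm (open_le_of_integral_eq ν μ (fun f => (h f).symm) hs)
      (open_le_of_integral_eq μ ν h hs)

private lemma continuous_integral_CM {X : Type*} [TopologicalSpace X] [CompactSpace X]
    [MeasurableSpace X] [OpensMeasurableSpace X] (ρ : Measure X) [IsFiniteMeasure ρ] :
    Continuous fun f : C(X, ℂ) => ∫ x, f x ∂ρ := by
  have hint : ∀ f : C(X, ℂ), Integrable (⇑f) ρ := fun f =>
    f.continuous.integrable_of_hasCompactSupport (HasCompactSupport.of_compactSpace f)
  refine (LipschitzWith.of_dist_le_mul (K := (ρ Set.univ).toNNReal) fun f g => ?_).continuous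
  have h1 : dist (∫ x, f x ∂ρ) (∫ x, g x ∂ρ) = ‖∫ x, (f x - g x) ∂ρ‖ := by
    rw [dist_eq_norm, ← integral_sub (hint f) (hint g)]
  rw [h1]
  calc ‖∫ x, (f x - g x) ∂ρ‖ ≤ ∫ x, ‖f x - g x‖ ∂ρ := norm_integral_le_integral_norm _
    _ ≤ ∫ _x, dist f g ∂ρ := by
        apply integral_mono ((hint f).sub (hint g)).norm (integrable_const _)
        intro x
        simp only [Pi.sub_apply]
        rw [← dist_eq_norm]
        exact ContinuousMap.dist_apply_le_dist x
    _ = ((ρ Set.univ).toNNReal : ℝ) * dist f g := by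
        rw [integral_const, smul_eq_mul]
        rfl

/-! ### Evaluation maps -/

section Eval

variable {G : Type*} [CommGroup G] [TopologicalSpace G] [DiscreteTopology G]

private lemma continuous_evalC (g : G) : Continuous fun χ : PontryaginDual G => (χ g : ℂ) := by
  have h1 : Continuous (ContinuousMonoidHom.toContinuousMap :
      ContinuousMonoidHom G Circle → C(G, Circle)) :=
    (ContinuousMonoidHom.isInducing_toContinuousMap G Circle).continuous
  exact continuous_subtype_val.comp
    ((continuous_eval_const g : Continuous fun f : C(G, Circle) => f g).comp h1)

/-- Evaluation at `g` as a continuous map on the dual. -/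
private noncomputable def evalC (g : G) : C(PontryaginDual G, ℂ) :=
  ⟨fun χ => (χ g : ℂ), continuous_evalC g⟩

private lemma evalC_mul (g g' : G) : evalC (G := G) g * evalC g' = evalC (g * g') := by
  ext χ; simp [evalC, map_mul]

private lemma evalC_one : evalC (G := G) 1 = 1 := by
  ext χ; simp [evalC]

private lemma star_evalC (g : G) : star (evalC (G := G) g) = evalC g⁻¹ := by
  ext χ
  simp only [evalC, ContinuousMap.star_apply, ContinuousMap.coe_mk, RCLike.star_def]
  rw [← Circle.coe_inv_eq_conj, ← map_inv]

/-- The range of `evalC` as a submonoid of `C(Ĝ, ℂ)`. -/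
private noncomputable def evalSubmonoid : Submonoid C(PontryaginDual G, ℂ) where
  carrier := Set.range (evalC (G := G))
  one_mem' := ⟨1, evalC_one⟩
  mul_mem' := by
    rintro _ _ ⟨g, rfl⟩ ⟨g', rfl⟩
    exact ⟨g * g', (evalC_mul g g').symm⟩

private lemma star_evalRange :
    star (Set.range (evalC (G := G))) = Set.range (evalC (G := G)) := by
  ext f
  constructor
  · intro hf
    rw [Set.mem_star] at hf
    obtain ⟨g, hg⟩ := hf
    exact ⟨g⁻¹, by rw [← star_evalC, hg, star_star]⟩
  · rintro ⟨g, rfl⟩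
    rw [Set.mem_star, star_evalC]
    exact ⟨g⁻¹, rfl⟩

end Eval


/-- Let `G` be a discrete abelian group, `H ≤ G` a subgroup with annihilator
`H⊥ = {χ ∈ Ĝ : χ(h) = 1 for all h ∈ H}` in the Pontryagin dual `Ĝ`, and `λ` a finite
regular Borel measure on `Ĝ`.  Then `∫_{Ĝ} χ(g) dλ(χ) = 0` for all `g ∈ G \ H` if and
only if `λ` is invariant under translation by every element of `H⊥`. -/
theorem fourier_vanishing_iff_annihilator_invariant
    {G : Type*} [CommGroup G] [TopologicalSpace G] [DiscreteTopology G]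
    (H : Subgroup G)
    [MeasurableSpace (PontryaginDual G)] [BorelSpace (PontryaginDual G)]
    (lam : Measure (PontryaginDual G)) [IsFiniteMeasure lam] [lam.Regular] :
    (∀ g : G, g ∉ H → ∫ χ : PontryaginDual G, (χ g : ℂ) ∂lam = 0) ↔
      (∀ χ₀ : PontryaginDual G, (∀ h : G, h ∈ H → χ₀ h = 1) →
        Measure.map (fun χ : PontryaginDual G => χ₀ * χ) lam = lam) := by
  have hint : ∀ (ρ : Measure (PontryaginDual G)) [IsFiniteMeasure ρ]
      (f : C(PontryaginDual G, ℂ)), Integrable (⇑f) ρ := fun ρ _ f =>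
    f.continuous.integrable_of_hasCompactSupport (HasCompactSupport.of_compactSpace f)
  constructor
  · -- forward direction
    intro hg χ₀ hχ₀
    have hTfun : (fun χ : PontryaginDual G => χ₀ * χ) = ⇑(Homeomorph.mulLeft χ₀) := rfl
    set μ : Measure (PontryaginDual G) :=
      Measure.map (fun χ : PontryaginDual G => χ₀ * χ) lam with hμ
    haveI : IsFiniteMeasure μ := by
      rw [hμ, hTfun]
      exact Measure.isFiniteMeasure_map lam _
    haveI : μ.Regular := by
      rw [hμ, hTfun]
      exact Measure.Regular.map (Homeomorph.mulLeft χ₀)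
    -- Fourier coefficients agree
    have hcoeff : ∀ g : G,
        ∫ χ : PontryaginDual G, (χ g : ℂ) ∂μ = ∫ χ : PontryaginDual G, (χ g : ℂ) ∂lam := by
      intro g
      have hmap : ∫ χ : PontryaginDual G, (χ g : ℂ) ∂μ
          = ∫ χ : PontryaginDual G, ((χ₀ * χ) g : ℂ) ∂lam := by
        rw [hμ, hTfun]
        rw [integral_map (Homeomorph.mulLeft χ₀).continuous.aemeasurable
          ((continuous_evalC g).aestronglyMeasurable)]
        rfl
      have hsplit : ∀ χ : PontryaginDual G, ((χ₀ * χ) g : ℂ) = (χ₀ g : ℂ) * (χ g : ℂ) := by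
        intro χ; rfl
      rw [hmap]
      simp_rw [hsplit]
      rw [integral_const_mul]
      by_cases hgH : g ∈ H
      · rw [hχ₀ g hgH]
        simp
      · rw [hg g hgH, mul_zero]
    -- all continuous complex functions integrate the same
    have hallC : ∀ f : C(PontryaginDual G, ℂ), ∫ χ, f χ ∂μ = ∫ χ, f χ ∂lam := by
      intro f
      set E : Set C(PontryaginDual G, ℂ) := Set.range (evalC (G := G)) with hE
      set A : StarSubalgebra ℂ C(PontryaginDual G, ℂ) := StarAlgebra.adjoin ℂ E with hA
      -- A separates points
      have hsep : A.SeparatesPoints := by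
        intro χ χ' hne
        obtain ⟨g, hgne⟩ := DFunLike.ne_iff.mp hne
        refine ⟨_, ⟨evalC g, ?_, rfl⟩, ?_⟩
        · exact StarAlgebra.subset_adjoin ℂ E ⟨g, rfl⟩
        · simpa [evalC, Subtype.coe_inj, Circle.coe_inj] using hgne
      have hSW := ContinuousMap.starSubalgebra_topologicalClosure_eq_top_of_separatesPoints A hsep
      -- the set of functions with equal integrals is closed and contains A
      have hAsub : (A : Set C(PontryaginDual G, ℂ)) ⊆
          {f | ∫ χ, f χ ∂μ = ∫ χ, f χ ∂lam} := by
        intro f hf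
        have hf' : f ∈ Submodule.span ℂ (Submonoid.closure (E ∪ star E) : Set _) := by
          rw [← StarAlgebra.adjoin_eq_span]
          exact hf
        rw [show E ∪ star E = E from by rw [star_evalRange, Set.union_self]] at hf'
        rw [show (Submonoid.closure E : Set _) = E from by
          rw [show E = (evalSubmonoid (G := G) : Set _) from rfl, Submonoid.closure_eq]] at hf'
        clear hf
        induction hf' using Submodule.span_induction with
        | mem x hx =>
          obtain ⟨g, rfl⟩ := hx
          exact hcoeff g
        | zero => simp
        | add x y _ _ hx hy =>
          show ∫ χ, (x + y) χ ∂μ = ∫ χ, (x + y) χ ∂lam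
          simp only [ContinuousMap.add_apply]
          rw [integral_add (hint μ x) (hint μ y), integral_add (hint lam x) (hint lam y), hx, hy]
        | smul c x _ hx =>
          show ∫ χ, (c • x) χ ∂μ = ∫ χ, (c • x) χ ∂lam
          simp only [ContinuousMap.smul_apply]
          rw [integral_smul, integral_smul, hx]
      have hVclosed : IsClosed {f : C(PontryaginDual G, ℂ) | ∫ χ, f χ ∂μ = ∫ χ, f χ ∂lam} :=
        isClosed_eq (continuous_integral_CM μ) (continuous_integral_CM lam)
      have hftop : f ∈ A.topologicalClosure := by
        rw [hSW]; trivial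
      have : f ∈ closure (A : Set C(PontryaginDual G, ℂ)) := hftop
      exact closure_minimal hAsub hVclosed this
    -- real version
    have hallR : ∀ f : C(PontryaginDual G, ℝ), ∫ χ, f χ ∂μ = ∫ χ, f χ ∂lam := by
      intro f
      have := hallC ⟨fun χ => ((f χ : ℝ) : ℂ), Complex.continuous_ofReal.comp f.continuous⟩
      simp only [ContinuousMap.coe_mk] at this
      have h2 : ∫ χ, ((f χ : ℝ) : ℂ) ∂μ = ((∫ χ, f χ ∂μ : ℝ) : ℂ) := integral_ofReal
      have h3 : ∫ χ, ((f χ : ℝ) : ℂ) ∂lam = ((∫ χ, f χ ∂lam : ℝ) : ℂ) := integral_ofReal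
      exact Complex.ofReal_injective (by rw [← h2, ← h3]; exact this)
    exact ext_of_integral_continuous μ lam hallR
  · -- backward direction
    intro hinv g hgH
    obtain ⟨χ₀, hχ₀H, hχ₀g⟩ := exists_annihilator_char H hgH
    have hmap := hinv χ₀ hχ₀H
    have hTfun : (fun χ : PontryaginDual G => χ₀ * χ) = ⇑(Homeomorph.mulLeft χ₀) := rfl
    have hi : ∫ χ : PontryaginDual G, (χ g : ℂ) ∂lam
        = ∫ χ : PontryaginDual G, ((χ₀ * χ) g : ℂ) ∂lam := by
      conv_lhs => rw [← hmap]
      rw [hTfun, integral_map (Homeomorph.mulLeft χ₀).continuous.aemeasurable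
        ((continuous_evalC g).aestronglyMeasurable)]
      rfl
    have hsplit : ∀ χ : PontryaginDual G, ((χ₀ * χ) g : ℂ) = (χ₀ g : ℂ) * (χ g : ℂ) := by
      intro χ; rfl
    simp_rw [hsplit] at hi
    rw [integral_const_mul] at hi
    have hc : ((χ₀ g : ℂ) - 1) * ∫ χ : PontryaginDual G, (χ g : ℂ) ∂lam = 0 := by
      rw [sub_mul, one_mul, ← hi, sub_self]
    rcases mul_eq_zero.mp hc with h | h
    · exact absurd (Circle.coe_eq_one.mp (by linear_combination h)) hχ₀g
    · exact h
end

section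
/- Let G be a countable group acting on a compact metrizable space X and φ a state on C(X) ⋊ G whose centralizer contains C(X). Then φ is tracial if and only if φ(u_g f u_h u_g*) = φ(f u_h) for all f ∈ C(X) and g, h ∈ G; equivalently, the associated state Φ on C(X) ⊗ C*(G) (with Φ(f ⊗ λ_h) = φ(f u_h)) is invariant under the action α of G given by α_g(f ⊗ a) = f(g⁻¹·) ⊗ λ_g a λ_g*. -/
/-- A tracial functional. -/
def IsTracial {A : Type*} [NormedRing A] [NormedAlgebra ℂ A] (φ : A →ₗ[ℂ] ℂ) : Prop :=
  ∀ a b : A, φ (a * b) = φ (b * a)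

lemma state_bound {A : Type*} [NormedRing A] [StarRing A] [CStarRing A] [NormedAlgebra ℂ A]
    [CompleteSpace A] [StarModule ℂ A] (φ : A →ₗ[ℂ] ℂ) (hφ : IsState φ) (a : A) :
    ‖φ a‖ ≤ 2 * ‖a‖ := by
  letI : CStarAlgebra A := ⟨⟩
  letI := CStarAlgebra.spectralOrder A
  haveI := CStarAlgebra.spectralOrderedRing A
  -- φ is nonneg on nonneg elements
  have φnn : ∀ c : A, 0 ≤ c → ∃ r : ℝ, 0 ≤ r ∧ φ c = r := by
    intro c hc
    rw [StarOrderedRing.nonneg_iff] at hc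
    induction hc using AddSubmonoid.closure_induction with
    | mem x hx => obtain ⟨s, rfl⟩ := hx; exact hφ.2 s
    | zero => exact ⟨0, le_refl 0, by simp⟩
    | add x y _ _ hx hy =>
      obtain ⟨r, hr, hr'⟩ := hx; obtain ⟨r', hs, hs'⟩ := hy
      exact ⟨r + r', by positivity, by rw [map_add, hr', hs']; push_cast; ring⟩
  have φalg : ∀ t : ℝ, φ (algebraMap ℝ A t) = (t : ℂ) := by
    intro t
    rw [IsScalarTower.algebraMap_apply ℝ ℂ A, Algebra.algebraMap_eq_smul_one, map_smul,
      hφ.1, smul_eq_mul, mul_one]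
    norm_num
  -- bound on selfadjoint elements
  have hsa : ∀ x : A, IsSelfAdjoint x → ∃ t : ℝ, φ x = (t : ℂ) ∧ |t| ≤ ‖x‖ := by
    intro x hx
    obtain ⟨r, hr, hr'⟩ := φnn _ (sub_nonneg.mpr hx.le_algebraMap_norm_self)
    obtain ⟨r', hs, hs'⟩ := φnn _ (sub_nonneg.mpr hx.neg_algebraMap_norm_le_self)
    rw [map_sub, φalg] at hr'
    rw [map_sub, map_neg, φalg] at hs'
    refine ⟨‖x‖ - r, by push_cast; linear_combination -hr', ?_⟩
    have hx2 : φ x - -(‖x‖:ℂ) = (r' : ℂ) := hs'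
    have : (‖x‖ : ℂ) - φ x = (r : ℂ) := hr'
    have h2 : ((‖x‖ - r : ℝ) : ℂ) = φ x := by push_cast; rw [← this]; ring
    have h3 : ((r' - ‖x‖ : ℝ) : ℂ) = φ x := by push_cast; rw [← hx2]; ring
    have h4 : ‖x‖ - r = r' - ‖x‖ := by
      have := h2.trans h3.symm
      exact_mod_cast this
    rw [abs_le]
    constructor <;> nlinarith
  -- decompose a into selfadjoint parts
  obtain ⟨x, hxdef⟩ : ∃ x : A, x = (2:ℂ)⁻¹ • (a + star a) := ⟨_, rfl⟩
  obtain ⟨y, hydef⟩ : ∃ y : A, y = (-(Complex.I/2)) • (a - star a) := ⟨_, rfl⟩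
  have hxsa : IsSelfAdjoint x := by
    rw [IsSelfAdjoint, hxdef, star_smul, star_add, star_star]
    simp [add_comm, RCLike.star_def, Complex.conj_inv]
  have hysa : IsSelfAdjoint y := by
    rw [IsSelfAdjoint, hydef, star_smul, star_sub, star_star]
    rw [show star (-(Complex.I/2)) = Complex.I/2 from by
      simp [Complex.ext_iff]
      norm_num]
    rw [show star a - a = -(a - star a) from (neg_sub a (star a)).symm]
    rw [smul_neg, ← neg_smul]
  have hdecomp : a = x + Complex.I • y := by
    rw [hxdef, hydef, smul_smul]
    rw [show Complex.I * -(Complex.I/2) = (2:ℂ)⁻¹ from by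
      rw [mul_neg, mul_div_assoc', Complex.I_mul_I]; norm_num]
    rw [← smul_add]
    rw [show a + star a + (a - star a) = (2:ℂ) • a from by rw [two_smul ℂ a]; abel]
    rw [smul_smul]; norm_num
  have hxn : ‖x‖ ≤ ‖a‖ := by
    rw [hxdef]
    calc ‖(2:ℂ)⁻¹ • (a + star a)‖ = ‖(2:ℂ)⁻¹‖ * ‖a + star a‖ := norm_smul _ _
      _ ≤ 2⁻¹ * (‖a‖ + ‖star a‖) := by
          gcongr
          · norm_num
          · exact norm_add_le _ _
      _ = ‖a‖ := by rw [norm_star]; ring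
  have hyn : ‖y‖ ≤ ‖a‖ := by
    rw [hydef]
    calc ‖(-(Complex.I/2)) • (a - star a)‖ = ‖(-(Complex.I/2))‖ * ‖a - star a‖ := norm_smul _ _
      _ ≤ 2⁻¹ * (‖a‖ + ‖star a‖) := by
          gcongr
          · simp [norm_div]
          · exact norm_sub_le _ _
      _ = ‖a‖ := by rw [norm_star]; ring
  obtain ⟨t, ht, ht'⟩ := hsa x hxsa
  obtain ⟨s, hs, hs'⟩ := hsa y hysa
  calc ‖φ a‖ = ‖φ x + Complex.I * φ y‖ := by
        rw [hdecomp, map_add, map_smul, smul_eq_mul]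
    _ ≤ ‖φ x‖ + ‖Complex.I * φ y‖ := norm_add_le _ _
    _ = |t| + |s| := by rw [ht, hs]; simp
    _ ≤ ‖a‖ + ‖a‖ := add_le_add (ht'.trans hxn) (hs'.trans hyn)
    _ = 2 * ‖a‖ := by ring

/-- Let a countable group `G` act on a compact metrizable space `X` and let `φ` be a
state on `C(X) ⋊ G` whose centralizer contains `C(X)`.  Then `φ` is tracial if and only
if `φ(u_g f u_h u_g*) = φ(f u_h)` for all `f ∈ C(X)` and `g, h ∈ G`; equivalently, the
associated state `Φ` on `C(X) ⊗ C*(G)` (determined by `Φ(f ⊗ λ_h) = φ(f u_h)`) is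
invariant under the action `α_g(f ⊗ a) = f(g⁻¹·) ⊗ λ_g a λ_g*`, i.e.
`φ(f(g⁻¹·) u_{ghg⁻¹}) = φ(f u_h)` for all `f, g, h`. -/
theorem tracial_iff_alpha_invariant
    {G : Type*} [Group G] [Countable G]
    {X : Type*} [TopologicalSpace X] [CompactSpace X]
    [TopologicalSpace.MetrizableSpace X] [MulAction G X]
    (hcont : ∀ g : G, Continuous fun x : X => g • x)
    {A : Type*} [NormedRing A] [StarRing A] [CStarRing A] [NormedAlgebra ℂ A]
    [CompleteSpace A] [StarModule ℂ A]
    (ι : C(X, ℂ) →⋆ₐ[ℂ] A) (u : G → A)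
    (hu_mul : ∀ g h : G, u g * u h = u (g * h)) (hu_one : u 1 = 1)
    (hu_star : ∀ g : G, star (u g) = u g⁻¹)
    (hcov : ∀ (g : G) (f : C(X, ℂ)),
      u g * ι f * star (u g) = ι ⟨fun x => f (g⁻¹ • x), f.continuous.comp (hcont g⁻¹)⟩)
    -- `A` is generated by `C(X)` and the unitaries `u g`
    (hgen : Dense (↑(Submodule.span ℂ
      {a : A | ∃ (f : C(X, ℂ)) (g : G), a = ι f * u g}) : Set A))
    (φ : A →ₗ[ℂ] ℂ) (hφ : IsState φ)
    (hcen : ∀ (f : C(X, ℂ)) (a : A), φ (ι f * a) = φ (a * ι f)) :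
    (IsTracial φ ↔
      ∀ (f : C(X, ℂ)) (g h : G),
        φ (u g * ι f * u h * star (u g)) = φ (ι f * u h)) ∧
    (IsTracial φ ↔
      ∀ (f : C(X, ℂ)) (g h : G),
        φ (ι ⟨fun x => f (g⁻¹ • x), f.continuous.comp (hcont g⁻¹)⟩ * u (g * h * g⁻¹)) =
          φ (ι f * u h)) := by
  -- the translation action on C(X)
  let τ : G → C(X, ℂ) → C(X, ℂ) :=
    fun g f => ⟨fun x => f (g⁻¹ • x), f.continuous.comp (hcont g⁻¹)⟩
  have hcov' : ∀ (g : G) (f : C(X, ℂ)), u g * ι f * star (u g) = ι (τ g f) :=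
    fun g f => hcov g f
  have hτmul : ∀ (g : G) (f f' : C(X, ℂ)), τ g (f * f') = τ g f * τ g f' := by
    intro g f f'
    ext x
    simp [τ]
  have hτcomp : ∀ (g g' : G) (f : C(X, ℂ)), τ g (τ g' f) = τ (g * g') f := by
    intro g g' f
    ext x
    simp [τ, mul_smul]
  have hsu : ∀ g : G, star (u g) * u g = 1 := fun g => by
    rw [hu_star, hu_mul, inv_mul_cancel, hu_one]
  have hkey : ∀ (g : G) (f : C(X, ℂ)), u g * ι f = ι (τ g f) * u g := by
    intro g f
    calc u g * ι f = u g * ι f * (star (u g) * u g) := by rw [hsu, mul_one]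
      _ = (u g * ι f * star (u g)) * u g := by rw [← mul_assoc]
      _ = ι (τ g f) * u g := by rw [hcov']
  have hLHS : ∀ (f : C(X, ℂ)) (g h : G),
      u g * ι f * u h * star (u g) = ι (τ g f) * u (g * h * g⁻¹) := by
    intro f g h
    rw [hu_star]
    calc u g * ι f * u h * u g⁻¹ = (u g * ι f) * (u h * u g⁻¹) := by rw [mul_assoc]
      _ = ι (τ g f) * u g * u (h * g⁻¹) := by rw [hkey, hu_mul]
      _ = ι (τ g f) * (u g * u (h * g⁻¹)) := by rw [mul_assoc]
      _ = ι (τ g f) * u (g * (h * g⁻¹)) := by rw [hu_mul]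
      _ = ι (τ g f) * u (g * h * g⁻¹) := by rw [mul_assoc]
  -- equivalence of the two right-hand conditions
  have hiff : (∀ (f : C(X, ℂ)) (g h : G),
        φ (u g * ι f * u h * star (u g)) = φ (ι f * u h)) ↔
      (∀ (f : C(X, ℂ)) (g h : G),
        φ (ι (τ g f) * u (g * h * g⁻¹)) = φ (ι f * u h)) := by
    constructor
    · intro H f g h; rw [← hLHS]; exact H f g h
    · intro H f g h; rw [hLHS]; exact H f g h
  -- forward direction
  have fwd : IsTracial φ → ∀ (f : C(X, ℂ)) (g h : G),
      φ (u g * ι f * u h * star (u g)) = φ (ι f * u h) := by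
    intro ht f g h
    calc φ (u g * ι f * u h * star (u g))
        = φ (u g * (ι f * u h * star (u g))) := by simp only [mul_assoc]
      _ = φ (ι f * u h * star (u g) * u g) := ht _ _
      _ = φ (ι f * u h) := by rw [mul_assoc, hsu, mul_one]
  -- backward direction from the α-invariance form
  have bwd : (∀ (f : C(X, ℂ)) (g h : G),
      φ (ι (τ g f) * u (g * h * g⁻¹)) = φ (ι f * u h)) → IsTracial φ := by
    intro H
    have hprod : ∀ (f f' : C(X, ℂ)) (g g' : G),
        (ι f * u g) * (ι f' * u g') = ι (f * τ g f') * u (g * g') := by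
      intro f f' g g'
      calc (ι f * u g) * (ι f' * u g') = ι f * (u g * ι f') * u g' := by
            simp only [mul_assoc]
        _ = ι f * (ι (τ g f') * u g) * u g' := by rw [hkey]
        _ = (ι f * ι (τ g f')) * (u g * u g') := by simp only [mul_assoc]
        _ = ι (f * τ g f') * u (g * g') := by rw [← map_mul, hu_mul]
    -- the core computation on the spanning set
    have hcore : ∀ (f f' : C(X, ℂ)) (g g' : G),
        φ ((ι f * u g) * (ι f' * u g')) = φ ((ι f' * u g') * (ι f * u g)) := by
      intro f f' g g'
      rw [hprod, hprod]
      calc φ (ι (f * τ g f') * u (g * g'))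
          = φ (ι f * (ι (τ g f') * u (g * g'))) := by rw [map_mul ι, mul_assoc]
        _ = φ ((ι (τ g f') * u (g * g')) * ι f) := hcen _ _
        _ = φ (ι (τ g f') * (ι (τ (g * g') f) * u (g * g'))) := by
            rw [mul_assoc, hkey]
        _ = φ (ι (τ g f' * τ g (τ g' f)) * u (g * g')) := by
            rw [map_mul ι, hτcomp, mul_assoc]
        _ = φ (ι (τ g (f' * τ g' f)) * u (g * g')) := by rw [hτmul]
        _ = φ (ι (τ g (f' * τ g' f)) * u (g * (g' * g) * g⁻¹)) := by
            rw [show g * (g' * g) * g⁻¹ = g * g' by group]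
        _ = φ (ι (f' * τ g' f) * u (g' * g)) := H _ _ _
    -- extend to the linear span, first variable
    set S : Set A := {a : A | ∃ (f : C(X, ℂ)) (g : G), a = ι f * u g} with hS
    have hspan1 : ∀ b ∈ S, ∀ a ∈ Submodule.span ℂ S, φ (a * b) = φ (b * a) := by
      intro b hb
      have hker : Submodule.span ℂ S ≤
          LinearMap.ker (φ ∘ₗ LinearMap.mulRight ℂ b - φ ∘ₗ LinearMap.mulLeft ℂ b) := by
        rw [Submodule.span_le]
        intro a ha
        obtain ⟨f, g, rfl⟩ := ha
        obtain ⟨f', g', rfl⟩ := hb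
        simp only [SetLike.mem_coe, LinearMap.mem_ker, LinearMap.sub_apply,
          LinearMap.comp_apply, LinearMap.mulRight_apply, LinearMap.mulLeft_apply]
        rw [sub_eq_zero]
        exact hcore f f' g g'
      intro a ha
      have := hker ha
      simp only [LinearMap.mem_ker, LinearMap.sub_apply, LinearMap.comp_apply,
        LinearMap.mulRight_apply, LinearMap.mulLeft_apply, sub_eq_zero] at this
      exact this
    -- second variable
    have hspan2 : ∀ a ∈ Submodule.span ℂ S, ∀ b ∈ Submodule.span ℂ S,
        φ (a * b) = φ (b * a) := by
      intro a ha
      have hker : Submodule.span ℂ S ≤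
          LinearMap.ker (φ ∘ₗ LinearMap.mulLeft ℂ a - φ ∘ₗ LinearMap.mulRight ℂ a) := by
        rw [Submodule.span_le]
        intro b hb
        simp only [SetLike.mem_coe, LinearMap.mem_ker, LinearMap.sub_apply,
          LinearMap.comp_apply, LinearMap.mulRight_apply, LinearMap.mulLeft_apply]
        rw [sub_eq_zero]
        exact hspan1 b hb a ha
      intro b hb
      have := hker hb
      simp only [LinearMap.mem_ker, LinearMap.sub_apply, LinearMap.comp_apply,
        LinearMap.mulRight_apply, LinearMap.mulLeft_apply, sub_eq_zero] at this
      exact this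
    -- extend by continuity and density
    have hbound := state_bound φ hφ
    let φc : A →L[ℂ] ℂ := LinearMap.mkContinuous φ 2 hbound
    have hφc : ∀ a : A, φc a = φ a := fun a => rfl
    intro a b
    let F : A × A → ℂ := fun p => φc (p.1 * p.2) - φc (p.2 * p.1)
    have hFcont : Continuous F :=
      ((φc.continuous.comp (continuous_fst.mul continuous_snd)).sub
        (φc.continuous.comp (continuous_snd.mul continuous_fst)))
    have hdense : Dense ((↑(Submodule.span ℂ S) : Set A) ×ˢ
        (↑(Submodule.span ℂ S) : Set A)) := hgen.prod hgen
    have hzero : F = fun _ => 0 := by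
      refine Continuous.ext_on hdense hFcont continuous_const ?_
      rintro ⟨p, q⟩ ⟨hp, hq⟩
      simp only [F, hφc]
      rw [sub_eq_zero]
      exact hspan2 p hp q hq
    have := congrFun hzero (a, b)
    simp only [F, hφc] at this
    rw [sub_eq_zero] at this
    exact this
  constructor
  · exact ⟨fwd, fun H => bwd (hiff.mp H)⟩
  · exact ⟨fun ht => hiff.mp (fwd ht), bwd⟩
end
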